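/- Let m₂ ≥ 2 be an integer, s ∈ (0,1), ρ ∈ [−1,1], δ ∈ {−1,1}, and fix any real number θ. Then the sum over l ∈ {0,…,m₂−1} of (s^l + s^{m₂−l})·(1 + ρ·cos(θ − δ·2πl/m₂)) equals ((1−s^{m₂})(1+s)/(1−s)) + ρ·cos(θ)·((1−s^{m₂})(1+s)(1−s)/(s² − 2s·cos(2π/m₂) + 1)). In particular this sum is the denominator (up to normalization) of the conditional wrapped geometric pmf of X₂ given X₁. -/

import Mathlib

open Real Finset

lemma key_complex (m : ℕ) (hm : 2 ≤ m) (s c : ℝ) (hs0 : 0 < s) (hs1 : s < 1)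
    (hc : c ≤ 1) (z : ℂ) (habs : ‖z‖ = 1) (hzm : z ^ m = 1)
    (hrel : z ^ 2 + 1 = 2 * (c : ℂ) * z) :
    (∑ l ∈ Finset.range m, ((s : ℂ) ^ l + (s : ℂ) ^ (m - l)) * z ^ l)
      = ((1 - s ^ m) * (1 - s ^ 2) / (1 + s ^ 2 - 2 * s * c) : ℝ) := by
  have hz0 : z ≠ 0 := by
    intro h; simp [h] at habs
  have hsne : (s : ℂ) ≠ 0 := by exact_mod_cast hs0.ne'
  have h1 : (s : ℂ) * z - 1 ≠ 0 := by
    intro h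
    have h' : (s : ℂ) * z = 1 := by linear_combination h
    have := congrArg norm h'
    simp [norm_mul, habs, Complex.norm_real, abs_of_pos hs0] at this
    linarith
  have h2 : z - (s : ℂ) ≠ 0 := by
    intro h
    have h' : z = (s : ℂ) := by linear_combination h
    rw [h'] at habs
    simp [Complex.norm_real, abs_of_pos hs0] at habs
    linarith
  have hq : z / (s : ℂ) - 1 ≠ 0 := by
    intro h
    apply h2
    field_simp at h
    linear_combination h
  have hden : (1 + s ^ 2 - 2 * s * c : ℝ) ≠ 0 := by nlinarith [sq_nonneg (1 - s)]
  have hdenC : (1 + (s:ℂ) ^ 2 - 2 * s * c) ≠ 0 := by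
    intro h
    apply hden
    exact_mod_cast h
  have step1 : (∑ l ∈ Finset.range m, ((s : ℂ) ^ l + (s : ℂ) ^ (m - l)) * z ^ l)
      = (∑ l ∈ Finset.range m, ((s:ℂ) * z) ^ l)
        + (s:ℂ) ^ m * (∑ l ∈ Finset.range m, (z / (s:ℂ)) ^ l) := by
    rw [Finset.mul_sum, ← Finset.sum_add_distrib]
    refine Finset.sum_congr rfl fun l hl => ?_
    have hlm : l ≤ m := (Finset.mem_range.mp hl).le
    rw [pow_sub₀ _ hsne hlm]
    field_simp
    rw [mul_pow, div_pow]
    field_simp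
  rw [step1, geom_sum_eq (by intro h; apply h1; rw [h]; ring) m,
    geom_sum_eq (by intro h; apply hq; rw [h]; ring) m]
  rw [mul_pow, hzm, div_pow, hzm]
  push_cast
  field_simp
  rw [eq_div_iff (by intro h; apply hdenC; linear_combination h)]
  linear_combination (((s:ℂ)^m - 1) * (1 - (s:ℂ)^2) * s) * hrel

theorem cwg_denominator_sum (m₂ : ℕ) (hm₂ : 2 ≤ m₂) (s ρ δ θ : ℝ)
    (hs0 : 0 < s) (hs1 : s < 1) (hρ₁ : -1 ≤ ρ) (hρ₂ : ρ ≤ 1) (hδ : δ = 1 ∨ δ = -1) :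
    (∑ l ∈ Finset.range m₂,
        (s ^ l + s ^ (m₂ - l)) * (1 + ρ * Real.cos (θ - δ * (2 * π * l / m₂)))) =
      (1 - s ^ m₂) * (1 + s) / (1 - s) +
        ρ * Real.cos θ *
          ((1 - s ^ m₂) * (1 + s) * (1 - s) / (s ^ 2 - 2 * s * Real.cos (2 * π / m₂) + 1)) := by
  have hmR : (m₂ : ℝ) ≠ 0 := by positivity
  have hmC : (m₂ : ℂ) ≠ 0 := by exact_mod_cast hmR
  set φ : ℝ := -(δ * (2 * π / m₂)) with hφ
  set z : ℂ := Complex.exp ((φ : ℂ) * Complex.I) with hz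
  have habs : ‖z‖ = 1 := Complex.norm_exp_ofReal_mul_I φ
  have hzm : z ^ m₂ = 1 := by
    rw [hz, ← Complex.exp_nat_mul]
    have h2 : ((m₂:ℂ)) * ((φ:ℂ) * Complex.I) = -((δ:ℂ) * (2*(π:ℂ)*Complex.I)) := by
      rw [hφ]
      push_cast
      field_simp
    rw [h2]
    rcases hδ with h | h <;> rw [h] <;> push_cast
    · rw [one_mul, Complex.exp_neg, Complex.exp_two_pi_mul_I]; norm_num
    · norm_num [Complex.exp_two_pi_mul_I]
  have hcosφ : Real.cos φ = Real.cos (2 * π / m₂) := by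
    rcases hδ with h | h <;> rw [hφ, h]
    · rw [Real.cos_neg]; norm_num
    · norm_num
  have hrel : z ^ 2 + 1 = 2 * ((Real.cos (2 * π / m₂) : ℝ) : ℂ) * z := by
    rw [hz, Complex.exp_mul_I, ← hcosφ, Complex.ofReal_cos]
    have hp := Complex.sin_sq_add_cos_sq ((φ:ℝ) : ℂ)
    linear_combination -hp + Complex.sin ((φ:ℝ) : ℂ) ^ 2 * Complex.I_sq
  have hcosl : ∀ l : ℕ, Real.cos (θ - δ * (2 * π * l / m₂))
      = (Complex.exp ((θ:ℂ) * Complex.I) * z ^ l).re := by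
    intro l
    rw [hz, ← Complex.exp_nat_mul, ← Complex.exp_add]
    have h3 : (θ:ℂ) * Complex.I + (l:ℂ) * ((φ:ℂ) * Complex.I)
        = ((θ + l * φ : ℝ) : ℂ) * Complex.I := by push_cast; ring
    rw [h3, Complex.exp_ofReal_mul_I_re]
    congr 1
    rw [hφ]
    ring
  have hsplit : (∑ l ∈ Finset.range m₂,
        (s ^ l + s ^ (m₂ - l)) * (1 + ρ * Real.cos (θ - δ * (2 * π * l / m₂))))
      = (∑ l ∈ Finset.range m₂, (s ^ l + s ^ (m₂ - l)))
        + ρ * (Complex.exp ((θ:ℂ) * Complex.I)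
            * ∑ l ∈ Finset.range m₂, ((s : ℂ) ^ l + (s : ℂ) ^ (m₂ - l)) * z ^ l).re := by
    rw [Finset.mul_sum, Complex.re_sum, Finset.mul_sum, ← Finset.sum_add_distrib]
    refine Finset.sum_congr rfl fun l hl => ?_
    rw [hcosl l]
    have h4 : Complex.exp ((θ:ℂ) * Complex.I) * (((s:ℂ) ^ l + (s:ℂ) ^ (m₂ - l)) * z ^ l)
        = ((s ^ l + s ^ (m₂ - l) : ℝ) : ℂ) * (Complex.exp ((θ:ℂ) * Complex.I) * z ^ l) := by
      push_cast; ring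
    rw [h4, Complex.re_ofReal_mul]
    ring
  have hkey := key_complex m₂ hm₂ s (Real.cos (2 * π / m₂)) hs0 hs1
    (Real.cos_le_one _) z habs hzm hrel
  have hpart1 : (∑ l ∈ Finset.range m₂, (s ^ l + s ^ (m₂ - l)))
      = (1 - s ^ m₂) * (1 + s) / (1 - s) := by
    rw [Finset.sum_add_distrib]
    have hA : ∑ l ∈ Finset.range m₂, s ^ l = (1 - s ^ m₂) / (1 - s) := by
      rw [geom_sum_eq hs1.ne m₂, ← neg_sub 1 s, ← neg_sub 1 (s ^ m₂), neg_div_neg_eq]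
    have hB : ∑ l ∈ Finset.range m₂, s ^ (m₂ - l) = s * ((1 - s ^ m₂) / (1 - s)) := by
      rw [← Finset.sum_range_reflect]
      have h5 : ∀ l ∈ Finset.range m₂, s ^ (m₂ - (m₂ - 1 - l)) = s * s ^ l := by
        intro l hl
        have hl' : l < m₂ := Finset.mem_range.mp hl
        have h6 : m₂ - (m₂ - 1 - l) = l + 1 := by omega
        rw [h6, pow_succ]
        ring
      rw [Finset.sum_congr rfl h5, ← Finset.mul_sum, hA]
    rw [hA, hB]
    have h1s : (1:ℝ) - s ≠ 0 := by linarith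
    field_simp
  rw [hsplit, hpart1, hkey, mul_comm (Complex.exp ((θ:ℂ) * Complex.I)),
    Complex.re_ofReal_mul, Complex.exp_ofReal_mul_I_re]
  have hS : (1 - s ^ m₂) * (1 - s ^ 2) / (1 + s ^ 2 - 2 * s * Real.cos (2 * π / m₂))
      = (1 - s ^ m₂) * (1 + s) * (1 - s) / (s ^ 2 - 2 * s * Real.cos (2 * π / m₂) + 1) := by
    rw [show (1 - s ^ m₂) * (1 - s ^ 2) = (1 - s ^ m₂) * (1 + s) * (1 - s) by ring,
      show (1 + s ^ 2 - 2 * s * Real.cos (2 * π / m₂))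
        = (s ^ 2 - 2 * s * Real.cos (2 * π / m₂) + 1) by ring]
  rw [hS]
  ring
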